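/- arXiv:0708.0175 — 3 statements merged into one kernel-verified Lean document; each statement's English description precedes it below -/
import Mathlib

section
/- Let p ≥ 1 be an integer and Q > 0. For any pair θ, θ' ∈ E_p(Q), the Hellinger distance is dominated by the L²-distance between the densities: d_H(P_{θ'}, P_θ) ≤ (e^B/2) ‖f_{θ'} − f_θ‖_{L²[0,1]}. In particular, if d_H(P_{θ'}, P_θ) > ε for some ε > 0, then ‖f_{θ'} − f_θ‖_∞ ≥ ‖f_{θ'} − f_θ‖_{L²[0,1]} > 2 e^{−B} ε. -/
open MeasureTheory Filter ProbabilityTheory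

noncomputable section

/-- `v₀ = 0`; for `j ≥ 1`, `v_j = j+1` if `j` odd, `v_j = j` if `j` even. -/
def vcoef (j : ℕ) : ℕ := if j = 0 then 0 else if j % 2 = 1 then j + 1 else j

/-- The trigonometric basis of `L²[0,1]`. -/
def phiB (j : ℕ) (x : ℝ) : ℝ :=
  if j = 0 then 1
  else if j % 2 = 1 then Real.sqrt 2 * Real.sin (2 * Real.pi * (((j + 1) / 2 : ℕ) : ℝ) * x)
  else Real.sqrt 2 * Real.cos (2 * Real.pi * (((j / 2 : ℕ) : ℝ)) * x)

/-- The Sobolev ellipsoid `E_p(Q)`. -/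
def ellipsoid (p : ℕ) (Q : ℝ) : Set (ℕ → ℝ) :=
  {θ | Summable (fun j => (vcoef j : ℝ) ^ (2 * p) * θ j ^ 2) ∧
    ∑' j, (vcoef j : ℝ) ^ (2 * p) * θ j ^ 2 < Q}

/-- The Sobolev space `E_p = E_p(∞)`. -/
def sobolev (p : ℕ) : Set (ℕ → ℝ) :=
  {θ | Summable fun j => (vcoef j : ℝ) ^ (2 * p) * θ j ^ 2}

/-- `A = Σ_{j≥1} v_j^{-2p}`. -/
def Aconst (p : ℕ) : ℝ := ∑' j : ℕ, ((vcoef (j + 1) : ℝ) ^ (2 * p))⁻¹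

/-- `B = √(2QA)`. -/
def Bconst (p : ℕ) (Q : ℝ) : ℝ := Real.sqrt (2 * Q * Aconst p)

/-- `B₁² = e^{-8B}`. -/
def B1sq (p : ℕ) (Q : ℝ) : ℝ := Real.exp (-8 * Bconst p Q)

/-- `Σ_{j≥1} θ_j φ_j(x)`. -/
def logDen (θ : ℕ → ℝ) (x : ℝ) : ℝ := ∑' j : ℕ, θ (j + 1) * phiB (j + 1) x

/-- `f_θ(x) = exp(Σ_{j≥1} θ_j φ_j(x)) / ∫₀¹ exp(Σ_{j≥1} θ_j φ_j(t)) dt`. -/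
def fdens (θ : ℕ → ℝ) (x : ℝ) : ℝ :=
  Real.exp (logDen θ x) / ∫ t in Set.Icc (0 : ℝ) 1, Real.exp (logDen θ t)

/-- `P_θ`, the probability measure on `[0,1]` with density `f_θ`. -/
def Pmeas (θ : ℕ → ℝ) : Measure ℝ :=
  (volume.restrict (Set.Icc (0 : ℝ) 1)).withDensity fun x => ENNReal.ofReal (fdens θ x)

/-- Hellinger distance between two densities on `[0,1]`. -/
def hell (f g : ℝ → ℝ) : ℝ :=
  Real.sqrt (∫ x in Set.Icc (0 : ℝ) 1, (Real.sqrt (f x) - Real.sqrt (g x)) ^ 2)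

/-- Hellinger distance `d_H(P_θ, P_{θ'})`. -/
def dH (θ θ' : ℕ → ℝ) : ℝ := hell (fdens θ) (fdens θ')

/-- Posterior probability of a set `S` of parameters given data `xs` and prior `π`. -/
def posterior (π : Measure (ℕ → ℝ)) {n : ℕ} (xs : Fin n → ℝ) (S : Set (ℕ → ℝ)) : ℝ :=
  (∫ θ in S, ∏ i, fdens θ (xs i) ∂π) / ∫ θ, ∏ i, fdens θ (xs i) ∂π

/-- `ε_n = n^{-p/(2p+1)}`. -/
def eps (p : ℕ) (n : ℕ) : ℝ := (n : ℝ) ^ (-(p : ℝ) / (2 * p + 1))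

/-- Restriction of a measure to a set, normalized to a probability measure. -/
def normRestrict (μ : Measure (ℕ → ℝ)) (S : Set (ℕ → ℝ)) : Measure (ℕ → ℝ) :=
  (μ S)⁻¹ • μ.restrict S

/-- The Bayes estimator: posterior expected density. -/
def bayesEst (π : Measure (ℕ → ℝ)) {n : ℕ} (xs : Fin n → ℝ) (x : ℝ) : ℝ :=
  (∫ θ, fdens θ x * ∏ i, fdens θ (xs i) ∂π) / ∫ θ, ∏ i, fdens θ (xs i) ∂π

/-- `E_{θ₀}^n[ d_H²(f_{θ₀}, f̂_n) ]`, the risk of the Bayes estimator. -/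
def bayesRisk (π : Measure (ℕ → ℝ)) (θ₀ : ℕ → ℝ) (n : ℕ) : ℝ :=
  ∫ xs, (hell (fdens θ₀) (bayesEst π xs)) ^ 2 ∂(Measure.pi fun _ : Fin n => Pmeas θ₀)

end


section AuxProofs

open MeasureTheory Real

lemma aux_helperphi (t : ℝ) (h : |t| ≤ 1) : |Real.sqrt 2 * t| ≤ Real.sqrt 2 := by
  rw [abs_mul, abs_of_nonneg (Real.sqrt_nonneg 2)]
  nlinarith [Real.sqrt_nonneg 2]

lemma aux_phiB_abs_le (j : ℕ) (x : ℝ) : |phiB (j + 1) x| ≤ Real.sqrt 2 := by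
  unfold phiB
  split_ifs
  all_goals first
    | exact ‹False›.elim
    | exact absurd ‹(j : ℕ) + 1 = 0› (Nat.succ_ne_zero j)
    | exact aux_helperphi _ (Real.abs_sin_le_one _)
    | exact aux_helperphi _ (Real.abs_cos_le_one _)

lemma aux_measurable_phiB (j : ℕ) : Measurable (phiB j) := by
  unfold phiB; split_ifs
  · exact measurable_const
  · exact (Real.continuous_sin.comp (continuous_const.mul continuous_id)).measurable.const_mul _
  · exact (Real.continuous_cos.comp (continuous_const.mul continuous_id)).measurable.const_mul _

lemma aux_vcoef_ge (j : ℕ) : ((j : ℝ) + 1) ≤ (vcoef (j + 1) : ℝ) := by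
  unfold vcoef
  split_ifs <;> simp_all <;> push_cast <;> linarith

lemma aux_vcoef_one_le (j : ℕ) : (1 : ℝ) ≤ (vcoef (j + 1) : ℝ) :=
  le_trans (by have h : (0:ℝ) ≤ (j:ℝ) := Nat.cast_nonneg j; linarith) (aux_vcoef_ge j)

lemma aux_A_summable (p : ℕ) (hp : 1 ≤ p) :
    Summable (fun j : ℕ => ((vcoef (j + 1) : ℝ) ^ (2 * p))⁻¹) := by
  have hbase : Summable (fun j : ℕ => (((j : ℝ) + 1) ^ 2)⁻¹) := by
    have := (summable_nat_add_iff (f := fun n : ℕ => ((n : ℝ) ^ 2)⁻¹) 1).2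
      (Real.summable_nat_pow_inv.mpr one_lt_two)
    simpa [add_comm] using this
  refine Summable.of_nonneg_of_le (fun j => by positivity) (fun j => ?_) hbase
  refine inv_anti₀ (by positivity) ?_
  calc ((j : ℝ) + 1) ^ 2 ≤ ((j : ℝ) + 1) ^ (2 * p) :=
        pow_le_pow_right₀ (by have h : (0:ℝ) ≤ (j:ℝ) := Nat.cast_nonneg j; linarith) (by omega)
    _ ≤ (vcoef (j + 1) : ℝ) ^ (2 * p) :=
        pow_le_pow_left₀ (by positivity) (aux_vcoef_ge j) _

lemma aux_Aconst_nonneg (p : ℕ) : 0 ≤ Aconst p :=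
  tsum_nonneg fun j => by positivity

lemma aux_Bconst_nonneg (p : ℕ) (Q : ℝ) : 0 ≤ Bconst p Q := Real.sqrt_nonneg _

set_option maxHeartbeats 800000 in
lemma aux_logDen (p : ℕ) (hp : 1 ≤ p) (Q : ℝ) (hQ : 0 < Q) (θ : ℕ → ℝ)
    (hθ : θ ∈ ellipsoid p Q) :
    (∀ x, Summable (fun j => θ (j + 1) * phiB (j + 1) x)) ∧
    (∀ x, |logDen θ x| ≤ Bconst p Q) := by
  obtain ⟨hsum, hlt⟩ := hθ
  set u : ℕ → ℝ := fun j => (vcoef (j + 1) : ℝ) ^ p * |θ (j + 1)| with hu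
  set w : ℕ → ℝ := fun j => ((vcoef (j + 1) : ℝ) ^ p)⁻¹ with hw
  have hvpos : ∀ j, (0 : ℝ) < (vcoef (j + 1) : ℝ) ^ p :=
    fun j => pow_pos (lt_of_lt_of_le one_pos (aux_vcoef_one_le j)) p
  have hu2 : ∀ j, u j ^ 2 = (vcoef (j + 1) : ℝ) ^ (2 * p) * θ (j + 1) ^ 2 := by
    intro j
    simp only [hu]
    rw [mul_pow, sq_abs, ← pow_mul]
    ring_nf
  have hw2 : ∀ j, w j ^ 2 = ((vcoef (j + 1) : ℝ) ^ (2 * p))⁻¹ := by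
    intro j
    simp only [hw]
    rw [← inv_pow, ← pow_mul]
    ring_nf
  have hsu2 : Summable (fun j => u j ^ 2) := by
    simp only [hu2]
    exact (summable_nat_add_iff 1).2 hsum
  have hsw2 : Summable (fun j => w j ^ 2) := by
    simp only [hw2]; exact aux_A_summable p hp
  have hSa_le : ∑' j, u j ^ 2 ≤ Q := by
    have h0 : ((vcoef 0 : ℝ)) ^ (2 * p) * θ 0 ^ 2 = 0 := by
      have : vcoef 0 = 0 := by simp [vcoef]
      rw [this]
      have h2p : 2 * p ≠ 0 := by omega
      simp [zero_pow h2p]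
    calc ∑' j, u j ^ 2 = ∑' j, (vcoef (j + 1) : ℝ) ^ (2 * p) * θ (j + 1) ^ 2 := by
          simp only [hu2]
      _ ≤ ∑' j, (vcoef j : ℝ) ^ (2 * p) * θ j ^ 2 := by
          rw [hsum.tsum_eq_zero_add, h0, zero_add]
      _ ≤ Q := le_of_lt hlt
  have hA : ∑' j, w j ^ 2 = Aconst p := by
    simp only [hw2]; rfl
  have huw_nonneg : ∀ j, 0 ≤ u j * w j := fun j =>
    mul_nonneg (mul_nonneg (by positivity) (abs_nonneg _)) (by positivity)
  have huw : Summable (fun j => u j * w j) := by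
    refine Summable.of_nonneg_of_le huw_nonneg (fun j => ?_)
      ((hsu2.add hsw2).mul_left (1 / 2))
    have := sq_nonneg (u j - w j)
    have h2 := huw_nonneg j
    try simp only [Pi.add_apply] at *
    nlinarith
  have hCS : ∑' j, u j * w j ≤ Real.sqrt (Q * Aconst p) := by
    refine huw.tsum_le_of_sum_le fun s => ?_
    rw [Real.le_sqrt (Finset.sum_nonneg fun j _ => huw_nonneg j)
      (mul_nonneg hQ.le (aux_Aconst_nonneg p))]
    calc (∑ j ∈ s, u j * w j) ^ 2 ≤ (∑ j ∈ s, u j ^ 2) * ∑ j ∈ s, w j ^ 2 :=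
          Finset.sum_mul_sq_le_sq_mul_sq s u w
      _ ≤ Q * Aconst p := by
          refine mul_le_mul (le_trans (hsu2.sum_le_tsum s (fun j _ => sq_nonneg _)) hSa_le)
            (hA ▸ hsw2.sum_le_tsum s (fun j _ => sq_nonneg _))
            (Finset.sum_nonneg fun j _ => sq_nonneg _) hQ.le
  have habs : ∀ j x, |θ (j + 1) * phiB (j + 1) x| ≤ Real.sqrt 2 * (u j * w j) := by
    intro j x
    have huww : u j * w j = |θ (j + 1)| := by
      have hvne : ((vcoef (j + 1) : ℝ)) ^ p ≠ 0 := (hvpos j).ne'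
      simp only [hu, hw]
      rw [mul_comm, ← mul_assoc, inv_mul_cancel₀ hvne, one_mul]
    rw [abs_mul, huww]
    calc |θ (j + 1)| * |phiB (j + 1) x| ≤ |θ (j + 1)| * Real.sqrt 2 :=
          mul_le_mul_of_nonneg_left (aux_phiB_abs_le j x) (abs_nonneg _)
      _ = Real.sqrt 2 * |θ (j + 1)| := mul_comm _ _
  have hsumabs : ∀ x, Summable (fun j => |θ (j + 1) * phiB (j + 1) x|) := fun x =>
    Summable.of_nonneg_of_le (fun j => abs_nonneg _) (fun j => habs j x) (huw.mul_left _)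
  refine ⟨fun x => (hsumabs x).of_abs, fun x => ?_⟩
  have h1 : |logDen θ x| ≤ ∑' j, |θ (j + 1) * phiB (j + 1) x| := by
    have hs' : Summable fun j => ‖θ (j + 1) * phiB (j + 1) x‖ := by
      simpa only [Real.norm_eq_abs] using hsumabs x
    have := norm_tsum_le_tsum_norm hs'
    simpa only [Real.norm_eq_abs, logDen] using this
  calc |logDen θ x| ≤ ∑' j, |θ (j + 1) * phiB (j + 1) x| := h1
    _ ≤ ∑' j, Real.sqrt 2 * (u j * w j) :=
        (hsumabs x).tsum_le_tsum (fun j => habs j x) (huw.mul_left _)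
    _ = Real.sqrt 2 * ∑' j, u j * w j := tsum_mul_left
    _ ≤ Real.sqrt 2 * Real.sqrt (Q * Aconst p) :=
        mul_le_mul_of_nonneg_left hCS (Real.sqrt_nonneg _)
    _ = Bconst p Q := by
        rw [Bconst, mul_assoc, Real.sqrt_mul (by norm_num : (0:ℝ) ≤ 2)]

lemma aux_measurable_logDen (θ : ℕ → ℝ)
    (h : ∀ x, Summable fun j => θ (j + 1) * phiB (j + 1) x) :
    Measurable (logDen θ) := by
  refine measurable_of_tendsto_metrizable' (atTop : Filter (Finset ℕ))
    (f := fun s x => ∑ j ∈ s, θ (j + 1) * phiB (j + 1) x)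
    (fun s => Finset.measurable_sum s fun j _ => ((aux_measurable_phiB (j + 1)).const_mul _)) ?_
  rw [tendsto_pi_nhds]
  intro x
  exact (h x).hasSum

lemma aux_fdens (p : ℕ) (hp : 1 ≤ p) (Q : ℝ) (hQ : 0 < Q) (θ : ℕ → ℝ)
    (hθ : θ ∈ ellipsoid p Q) :
    Measurable (fdens θ) ∧
    (∀ x, Real.exp (-(2 * Bconst p Q)) ≤ fdens θ x) ∧
    (∀ x, fdens θ x ≤ Real.exp (2 * Bconst p Q)) := by
  set B := Bconst p Q with hB
  obtain ⟨hsummable, hbound⟩ := aux_logDen p hp Q hQ θ hθ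
  have hmlog : Measurable (logDen θ) := aux_measurable_logDen θ hsummable
  have hnum_lb : ∀ x, Real.exp (-B) ≤ Real.exp (logDen θ x) := fun x =>
    Real.exp_le_exp.2 (neg_le_of_abs_le (hbound x))
  have hnum_ub : ∀ x, Real.exp (logDen θ x) ≤ Real.exp B := fun x =>
    Real.exp_le_exp.2 (le_of_abs_le (hbound x))
  have hmeasnum : Measurable fun x => Real.exp (logDen θ x) := Real.measurable_exp.comp hmlog
  have hvol : volume.real (Set.Icc (0:ℝ) 1) = 1 := by
    rw [Measure.real, Real.volume_Icc]
    norm_num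
  have hint : IntegrableOn (fun t => Real.exp (logDen θ t)) (Set.Icc (0:ℝ) 1) volume := by
    refine Integrable.mono' (integrable_const (Real.exp B)) hmeasnum.aestronglyMeasurable
      (Filter.Eventually.of_forall fun x => ?_)
    rw [Real.norm_eq_abs, abs_of_pos (Real.exp_pos _)]
    exact hnum_ub x
  set D := ∫ t in Set.Icc (0:ℝ) 1, Real.exp (logDen θ t) with hD
  have hD_lb : Real.exp (-B) ≤ D := by
    have := setIntegral_ge_of_const_le (μ := volume) measurableSet_Icc
      (by rw [Real.volume_Icc]; exact ENNReal.ofReal_ne_top)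
      (fun x _ => hnum_lb x) hint
    rwa [hvol, one_smul] at this
  have hD_ub : D ≤ Real.exp B := by
    have := setIntegral_mono_on hint (integrable_const (Real.exp B)) measurableSet_Icc
      (fun x _ => hnum_ub x)
    rwa [setIntegral_const, hvol, one_smul] at this
  have hD_pos : 0 < D := lt_of_lt_of_le (Real.exp_pos _) hD_lb
  have hexp2 : Real.exp (-(2*B)) * Real.exp B = Real.exp (-B) := by
    rw [← Real.exp_add]; congr 1; ring
  have hexp3 : Real.exp (2*B) * Real.exp (-B) = Real.exp B := by
    rw [← Real.exp_add]; congr 1; ring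
  refine ⟨hmeasnum.div_const D, fun x => ?_, fun x => ?_⟩
  · rw [fdens, ← hD, le_div_iff₀ hD_pos]
    calc Real.exp (-(2*B)) * D ≤ Real.exp (-(2*B)) * Real.exp B :=
          mul_le_mul_of_nonneg_left hD_ub (Real.exp_pos _).le
      _ = Real.exp (-B) := hexp2
      _ ≤ Real.exp (logDen θ x) := hnum_lb x
  · rw [fdens, ← hD, div_le_iff₀ hD_pos]
    calc Real.exp (logDen θ x) ≤ Real.exp B := hnum_ub x
      _ = Real.exp (2*B) * Real.exp (-B) := hexp3.symm
      _ ≤ Real.exp (2*B) * D := mul_le_mul_of_nonneg_left hD_lb (Real.exp_pos _).le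

lemma aux_sqrt_diff (m a b : ℝ) (hm : 0 < m) (ha : m ^ 2 ≤ a) (hb : m ^ 2 ≤ b) :
    (Real.sqrt a - Real.sqrt b) ^ 2 * (4 * m ^ 2) ≤ (a - b) ^ 2 := by
  have ha0 : (0:ℝ) ≤ a := le_trans (by positivity) ha
  have hb0 : (0:ℝ) ≤ b := le_trans (by positivity) hb
  have h1 : Real.sqrt a * Real.sqrt a = a := Real.mul_self_sqrt ha0
  have h2 : Real.sqrt b * Real.sqrt b = b := Real.mul_self_sqrt hb0
  have ha' : m ≤ Real.sqrt a := (Real.le_sqrt hm.le ha0).2 ha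
  have hb' : m ≤ Real.sqrt b := (Real.le_sqrt hm.le hb0).2 hb
  have hab : a - b = (Real.sqrt a - Real.sqrt b) * (Real.sqrt a + Real.sqrt b) := by
    linear_combination h2 - h1
  have hs2 : (2 * m) ^ 2 ≤ (Real.sqrt a + Real.sqrt b) ^ 2 := by nlinarith
  calc (Real.sqrt a - Real.sqrt b) ^ 2 * (4 * m ^ 2)
      = (Real.sqrt a - Real.sqrt b) ^ 2 * (2 * m) ^ 2 := by ring
    _ ≤ (Real.sqrt a - Real.sqrt b) ^ 2 * (Real.sqrt a + Real.sqrt b) ^ 2 :=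
        mul_le_mul_of_nonneg_left hs2 (sq_nonneg _)
    _ = (a - b) ^ 2 := by rw [hab]; ring

end AuxProofs


open MeasureTheory

/-- Hellinger distance dominated by the L2 distance between densities. -/
theorem statement_14 (p : ℕ) (hp : 1 ≤ p) (Q : ℝ) (hQ : 0 < Q)
    (θ θ' : ℕ → ℝ) (hθ : θ ∈ ellipsoid p Q) (hθ' : θ' ∈ ellipsoid p Q) :
    hell (fdens θ') (fdens θ) ≤
      Real.exp (Bconst p Q) / 2 *
        Real.sqrt (∫ x in Set.Icc (0 : ℝ) 1, (fdens θ' x - fdens θ x) ^ 2) ∧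
    ∀ ε > (0 : ℝ), ε < hell (fdens θ') (fdens θ) →
      Real.sqrt (∫ x in Set.Icc (0 : ℝ) 1, (fdens θ' x - fdens θ x) ^ 2) ≤
          (⨆ x : Set.Icc (0 : ℝ) 1, |fdens θ' (x : ℝ) - fdens θ (x : ℝ)|) ∧
      2 * Real.exp (-Bconst p Q) * ε <
        Real.sqrt (∫ x in Set.Icc (0 : ℝ) 1, (fdens θ' x - fdens θ x) ^ 2) := by
    classical
  set B := Bconst p Q with hB
  have hB0 : 0 ≤ B := aux_Bconst_nonneg p Q
  obtain ⟨hmeas, hlb, hub⟩ := aux_fdens p hp Q hQ θ hθ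
  obtain ⟨hmeas', hlb', hub'⟩ := aux_fdens p hp Q hQ θ' hθ'
  set m := Real.exp (-B) with hm
  have hm0 : 0 < m := Real.exp_pos _
  have hmsq : m ^ 2 = Real.exp (-(2 * B)) := by
    rw [hm, sq, ← Real.exp_add]; congr 1; ring
  have hexp2B : Real.exp (2 * B) = Real.exp B * Real.exp B := by
    rw [← Real.exp_add]; congr 1; ring
  have hvol : volume.real (Set.Icc (0:ℝ) 1) = 1 := by
    rw [Measure.real, Real.volume_Icc]; norm_num
  set g1 : ℝ → ℝ := fun x => (Real.sqrt (fdens θ' x) - Real.sqrt (fdens θ x)) ^ 2 with hg1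
  set g2 : ℝ → ℝ := fun x => (fdens θ' x - fdens θ x) ^ 2 with hg2
  have hmg1 : Measurable g1 := ((hmeas'.sqrt.sub hmeas.sqrt).pow_const 2)
  have hmg2 : Measurable g2 := ((hmeas'.sub hmeas).pow_const 2)
  have hbden : ∀ x, |fdens θ' x - fdens θ x| ≤ 2 * Real.exp (2 * B) := by
    intro x
    rw [abs_le]
    constructor <;> nlinarith [hlb x, hub x, hlb' x, hub' x, Real.exp_pos (-(2 * B))]
  have hsqle : ∀ (η : ℕ → ℝ), (∀ x, fdens η x ≤ Real.exp (2 * B)) →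
      ∀ x, Real.sqrt (fdens η x) ≤ Real.exp B := by
    intro η hη x
    calc Real.sqrt (fdens η x) ≤ Real.sqrt (Real.exp (2 * B)) := Real.sqrt_le_sqrt (hη x)
      _ = Real.exp B := by rw [hexp2B, Real.sqrt_mul_self (Real.exp_pos B).le]
  have hint1 : IntegrableOn g1 (Set.Icc (0:ℝ) 1) volume := by
    refine Integrable.mono' (integrable_const ((Real.exp B) ^ 2)) hmg1.aestronglyMeasurable
      (Filter.Eventually.of_forall fun x => ?_)
    rw [Real.norm_eq_abs, hg1]
    simp only []
    rw [abs_of_nonneg (sq_nonneg _)]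
    nlinarith [hsqle θ hub x, hsqle θ' hub' x, Real.sqrt_nonneg (fdens θ x),
      Real.sqrt_nonneg (fdens θ' x)]
  have hint2 : IntegrableOn g2 (Set.Icc (0:ℝ) 1) volume := by
    refine Integrable.mono' (integrable_const ((2 * Real.exp (2 * B)) ^ 2))
      hmg2.aestronglyMeasurable (Filter.Eventually.of_forall fun x => ?_)
    rw [Real.norm_eq_abs, hg2]
    simp only []
    rw [abs_of_nonneg (sq_nonneg _)]
    nlinarith [hbden x, abs_nonneg (fdens θ' x - fdens θ x), sq_abs (fdens θ' x - fdens θ x)]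
  set c : ℝ := Real.exp B ^ 2 / 4 with hc
  have hcpos : 0 < c := by positivity
  have hmm : m ^ 2 * Real.exp B ^ 2 = 1 := by
    rw [hmsq, sq, ← Real.exp_add, ← Real.exp_add,
      show -(2 * B) + (B + B) = 0 by ring, Real.exp_zero]
  have hkey : ∀ x, g1 x ≤ c * g2 x := by
    intro x
    have h := aux_sqrt_diff m (fdens θ' x) (fdens θ x) hm0 (by rw [hmsq]; exact hlb' x) (by rw [hmsq]; exact hlb x)
    have hc1 : c * (4 * m ^ 2) = 1 := by
      calc c * (4 * m ^ 2) = m ^ 2 * Real.exp B ^ 2 := by rw [hc]; ring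
        _ = 1 := hmm
    have h2 : g1 x * (c * (4 * m ^ 2)) ≤ c * g2 x := by
      calc g1 x * (c * (4 * m ^ 2)) = c * (g1 x * (4 * m ^ 2)) := by ring
        _ ≤ c * g2 x := mul_le_mul_of_nonneg_left h hcpos.le
    rwa [hc1, mul_one] at h2
  have hI2nonneg : 0 ≤ ∫ x in Set.Icc (0:ℝ) 1, g2 x :=
    setIntegral_nonneg measurableSet_Icc fun x _ => sq_nonneg _
  have hI : ∫ x in Set.Icc (0:ℝ) 1, g1 x ≤ c * ∫ x in Set.Icc (0:ℝ) 1, g2 x := by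
    have := setIntegral_mono_on hint1 (hint2.const_mul c) measurableSet_Icc
      (fun x _ => hkey x)
    rwa [integral_const_mul] at this
  have hpart1 : hell (fdens θ') (fdens θ) ≤
      Real.exp B / 2 * Real.sqrt (∫ x in Set.Icc (0 : ℝ) 1, (fdens θ' x - fdens θ x) ^ 2) := by
    rw [hell]
    calc Real.sqrt (∫ x in Set.Icc (0:ℝ) 1, (Real.sqrt (fdens θ' x) - Real.sqrt (fdens θ x)) ^ 2)
        ≤ Real.sqrt ((Real.exp B / 2) ^ 2 * ∫ x in Set.Icc (0:ℝ) 1, g2 x) := by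
          apply Real.sqrt_le_sqrt
          calc (∫ x in Set.Icc (0:ℝ) 1, (Real.sqrt (fdens θ' x) - Real.sqrt (fdens θ x)) ^ 2)
              = ∫ x in Set.Icc (0:ℝ) 1, g1 x := rfl
            _ ≤ c * ∫ x in Set.Icc (0:ℝ) 1, g2 x := hI
            _ = (Real.exp B / 2) ^ 2 * ∫ x in Set.Icc (0:ℝ) 1, g2 x := by rw [hc]; ring
      _ = Real.exp B / 2 * Real.sqrt (∫ x in Set.Icc (0:ℝ) 1, (fdens θ' x - fdens θ x) ^ 2) := by
          rw [Real.sqrt_mul (sq_nonneg _), Real.sqrt_sq (by positivity : (0:ℝ) ≤ Real.exp B / 2)]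
  refine ⟨hpart1, fun ε hε hεlt => ⟨?_, ?_⟩⟩
  · set M := ⨆ x : Set.Icc (0:ℝ) 1, |fdens θ' (x : ℝ) - fdens θ (x : ℝ)| with hM
    have hbdd : BddAbove (Set.range fun x : Set.Icc (0:ℝ) 1 =>
        |fdens θ' (x : ℝ) - fdens θ (x : ℝ)|) := by
      refine ⟨2 * Real.exp (2 * B), ?_⟩
      rintro y ⟨x, rfl⟩
      exact hbden x
    have hM0 : 0 ≤ M :=
      le_trans (abs_nonneg _) (le_ciSup hbdd (⟨0, by constructor <;> norm_num⟩ : Set.Icc (0:ℝ) 1))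
    have hle : (∫ x in Set.Icc (0:ℝ) 1, (fdens θ' x - fdens θ x) ^ 2) ≤ M ^ 2 := by
      have hmono := setIntegral_mono_on hint2 (integrable_const (M ^ 2)) measurableSet_Icc
        (fun x hx => ?_)
      · rwa [setIntegral_const, hvol, one_smul] at hmono
      · have h1 : |fdens θ' x - fdens θ x| ≤ M := le_ciSup hbdd (⟨x, hx⟩ : Set.Icc (0:ℝ) 1)
        calc g2 x = |fdens θ' x - fdens θ x| ^ 2 := (sq_abs _).symm
          _ ≤ M ^ 2 := by nlinarith [abs_nonneg (fdens θ' x - fdens θ x)]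
    calc Real.sqrt (∫ x in Set.Icc (0:ℝ) 1, (fdens θ' x - fdens θ x) ^ 2)
        ≤ Real.sqrt (M ^ 2) := Real.sqrt_le_sqrt hle
      _ = M := Real.sqrt_sq hM0
  · have h1 : ε < Real.exp B / 2 *
        Real.sqrt (∫ x in Set.Icc (0:ℝ) 1, (fdens θ' x - fdens θ x) ^ 2) :=
      lt_of_lt_of_le hεlt hpart1
    have hee : Real.exp (-B) * Real.exp B = 1 := by
      rw [← Real.exp_add]; simp
    nlinarith [mul_pos (Real.exp_pos (-B)) (sub_pos.2 h1), Real.exp_pos (-B), Real.exp_pos B]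
end

section
/- Let p ≥ 1 be an integer, Q > 0, and let θ₀ ∈ E_p(Q) with Σ_{j≥0} v_j^{2p} θ_{0,j}² = Q − δ₀ for some 0 < δ₀ ≤ Q. Fix 0 < η₀ ≤ √Q − √(Q − δ₀) and set C₀ = 16^{p+1} Q / η₀² and ε_n = n^{−p/(2p+1)}, N = ⌈(8Q/(B₁² ε_n²))^{1/(2p)}⌉. Then there exists n̄ such that for all n ≥ n̄, every sequence θ satisfying Σ_{j=1}^{N} (θ_j − θ_{0,j})² ≤ B₁² ε_n² / C₀ and Σ_{j=N+1}^∞ v_j^{2p} θ_j² ≤ B₁² ε_n² / 8 also satisfies (i) Σ_{j≥0} v_j^{2p} θ_j² < Q (i.e., θ ∈ E_p(Q)) and (ii) Σ_{j≥1} (θ_j − θ_{0,j})² ≤ B₁² ε_n². -/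
open MeasureTheory Filter ProbabilityTheory

open MeasureTheory

private lemma vcoef_le' (j : ℕ) : vcoef j ≤ j + 1 := by
  simp only [vcoef]; split_ifs <;> omega

private lemma le_vcoef' (j : ℕ) : j ≤ vcoef j := by
  simp only [vcoef]; split_ifs <;> omega

private lemma sqrt_add_le' (a b : ℝ) (ha : 0 ≤ a) (hb : 0 ≤ b) :
    Real.sqrt (a + b) ≤ Real.sqrt a + Real.sqrt b := by
  have h : a + b ≤ (Real.sqrt a + Real.sqrt b) ^ 2 := by
    nlinarith [Real.sq_sqrt ha, Real.sq_sqrt hb, Real.sqrt_nonneg a, Real.sqrt_nonneg b]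
  calc Real.sqrt (a + b) ≤ Real.sqrt ((Real.sqrt a + Real.sqrt b) ^ 2) := Real.sqrt_le_sqrt h
    _ = _ := Real.sqrt_sq (by positivity)

private lemma minkowski_sum' (s : Finset ℕ) (a b : ℕ → ℝ) :
    Real.sqrt (∑ j ∈ s, (a j + b j) ^ 2) ≤
      Real.sqrt (∑ j ∈ s, a j ^ 2) + Real.sqrt (∑ j ∈ s, b j ^ 2) := by
  have hA : (0:ℝ) ≤ ∑ j ∈ s, a j ^ 2 := Finset.sum_nonneg fun _ _ => sq_nonneg _
  have hB : (0:ℝ) ≤ ∑ j ∈ s, b j ^ 2 := Finset.sum_nonneg fun _ _ => sq_nonneg _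
  have hcs := Real.sum_mul_le_sqrt_mul_sqrt s a b
  have e : ∑ j ∈ s, (a j + b j) ^ 2
      = ∑ j ∈ s, a j ^ 2 + ∑ j ∈ s, b j ^ 2 + 2 * ∑ j ∈ s, a j * b j := by
    rw [Finset.mul_sum, ← Finset.sum_add_distrib, ← Finset.sum_add_distrib]
    exact Finset.sum_congr rfl fun j _ => by ring
  have expand : (Real.sqrt (∑ j ∈ s, a j ^ 2) + Real.sqrt (∑ j ∈ s, b j ^ 2)) ^ 2
      = (∑ j ∈ s, a j ^ 2) + (∑ j ∈ s, b j ^ 2)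
        + 2 * (Real.sqrt (∑ j ∈ s, a j ^ 2) * Real.sqrt (∑ j ∈ s, b j ^ 2)) := by
    rw [add_sq, Real.sq_sqrt hA, Real.sq_sqrt hB]; ring
  have key : ∑ j ∈ s, (a j + b j) ^ 2
      ≤ (Real.sqrt (∑ j ∈ s, a j ^ 2) + Real.sqrt (∑ j ∈ s, b j ^ 2)) ^ 2 := by
    rw [e, expand]; linarith
  calc Real.sqrt (∑ j ∈ s, (a j + b j) ^ 2)
      ≤ Real.sqrt ((Real.sqrt (∑ j ∈ s, a j ^ 2) + Real.sqrt (∑ j ∈ s, b j ^ 2)) ^ 2) :=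
        Real.sqrt_le_sqrt key
    _ = _ := Real.sqrt_sq (by positivity)
private lemma sub_sq_le_two_mul' (a b : ℝ) : (a - b) ^ 2 ≤ 2 * a ^ 2 + 2 * b ^ 2 := by
  nlinarith [sq_nonneg (a + b)]

set_option maxHeartbeats 1000000 in
/-- Claims (i) and (ii) in the proof of Theorem 2: for large n, members of the set E_n
lie in E_p(Q) and are ℓ²-close to θ₀. -/
theorem statement_16 (p : ℕ) (hp : 1 ≤ p) (Q : ℝ) (hQ : 0 < Q)
    (θ₀ : ℕ → ℝ) (δ₀ : ℝ) (hδ₀ : 0 < δ₀) (hδ₀Q : δ₀ ≤ Q)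
    (hθ₀sum : Summable fun j => (vcoef j : ℝ) ^ (2 * p) * θ₀ j ^ 2)
    (hθ₀ : ∑' j : ℕ, (vcoef j : ℝ) ^ (2 * p) * θ₀ j ^ 2 = Q - δ₀)
    (η₀ : ℝ) (hη₀ : 0 < η₀) (hη₀le : η₀ ≤ Real.sqrt Q - Real.sqrt (Q - δ₀))
    (C₀ : ℝ) (hC₀ : C₀ = 16 ^ (p + 1) * Q / η₀ ^ 2) :
    ∃ nbar : ℕ, ∀ n ≥ nbar, ∀ N : ℕ,
      N = ⌈(8 * Q / (B1sq p Q * eps p n ^ 2)) ^ ((1 : ℝ) / (2 * p))⌉₊ →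
      ∀ θ : ℕ → ℝ,
        (∑ j ∈ Finset.Icc 1 N, (θ j - θ₀ j) ^ 2 ≤ B1sq p Q * eps p n ^ 2 / C₀) →
        (Summable fun j : ℕ => (vcoef (N + 1 + j) : ℝ) ^ (2 * p) * θ (N + 1 + j) ^ 2) →
        (∑' j : ℕ, (vcoef (N + 1 + j) : ℝ) ^ (2 * p) * θ (N + 1 + j) ^ 2 ≤
            B1sq p Q * eps p n ^ 2 / 8) →
        θ ∈ ellipsoid p Q ∧
        (Summable fun j : ℕ => (θ (j + 1) - θ₀ (j + 1)) ^ 2) ∧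
        ∑' j : ℕ, (θ (j + 1) - θ₀ (j + 1)) ^ 2 ≤ B1sq p Q * eps p n ^ 2 := by
  have hB1 : 0 < B1sq p Q := Real.exp_pos _
  have hppos : (0:ℝ) < (p:ℝ) := by exact_mod_cast hp
  set c : ℝ := min (8 * Q / 4 ^ p) (min (2 * η₀ ^ 2) (8 * Q)) with hc
  have hcpos : 0 < c := lt_min (by positivity) (lt_min (by positivity) (by positivity))
  have htend : Filter.Tendsto (fun n : ℕ => eps p n ^ 2) Filter.atTop (nhds 0) := by
    have h1 : Filter.Tendsto (fun x : ℝ => x ^ (-((p:ℝ) / (2 * p + 1)))) Filter.atTop (nhds 0) :=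
      tendsto_rpow_neg_atTop (by positivity)
    have h2 : Filter.Tendsto (fun n : ℕ => eps p n) Filter.atTop (nhds 0) := by
      have h3 := h1.comp (tendsto_natCast_atTop_atTop (R := ℝ))
      simp only [eps, neg_div]; exact h3
    simpa using h2.pow 2
  have hev : ∀ᶠ n : ℕ in Filter.atTop, eps p n ^ 2 ≤ c / B1sq p Q :=
    htend.eventually (eventually_le_nhds (by positivity))
  obtain ⟨n₁, hn₁⟩ := Filter.eventually_atTop.mp hev
  refine ⟨max n₁ 1, fun n hn N hNdef θ hfin hsumtail htail => ?_⟩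
  have hn1 : 1 ≤ n := le_trans (le_max_right _ _) hn
  have hεpos : 0 < eps p n := Real.rpow_pos_of_pos (by exact_mod_cast hn1) _
  set t : ℝ := B1sq p Q * eps p n ^ 2 with htdef
  have htpos : 0 < t := by positivity
  have htc : t ≤ c := by
    have h := hn₁ n (le_trans (le_max_left _ _) hn)
    calc t = B1sq p Q * eps p n ^ 2 := htdef
      _ ≤ B1sq p Q * (c / B1sq p Q) := mul_le_mul_of_nonneg_left h hB1.le
      _ = c := by field_simp
  have ht1 : t ≤ 8 * Q / 4 ^ p := le_trans htc (min_le_left _ _)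
  have ht2 : t ≤ 2 * η₀ ^ 2 := le_trans htc (le_trans (min_le_right _ _) (min_le_left _ _))
  have ht3 : t ≤ 8 * Q := le_trans htc (le_trans (min_le_right _ _) (min_le_right _ _))
  set x : ℝ := (8 * Q / t) ^ ((1:ℝ) / (2 * p)) with hxdef
  have hQt : (0:ℝ) < 8 * Q / t := by positivity
  have hxpos : 0 < x := Real.rpow_pos_of_pos hQt _
  have h2p0 : (2 * p : ℕ) ≠ 0 := by omega
  have hpne : ((p:ℝ)) ≠ 0 := ne_of_gt hppos
  have hexp : (1:ℝ) / (2 * (p:ℝ)) * ((2 * p : ℕ):ℝ) = 1 := by push_cast; field_simp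
  have hxpow : x ^ (2 * p) = 8 * Q / t := by
    rw [hxdef, ← Real.rpow_natCast ((8 * Q / t) ^ ((1:ℝ) / (2 * (p:ℝ)))) (2 * p),
      ← Real.rpow_mul hQt.le, hexp, Real.rpow_one]
  have h4p : (4:ℝ) ^ p ≤ 8 * Q / t := by
    rw [le_div_iff₀ htpos]
    calc (4:ℝ) ^ p * t ≤ 4 ^ p * (8 * Q / 4 ^ p) := mul_le_mul_of_nonneg_left ht1 (by positivity)
      _ = 8 * Q := by field_simp
  have hx2 : (2:ℝ) ≤ x := by
    by_contra h
    push_neg at h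
    have hlt : x ^ (2 * p) < 2 ^ (2 * p) := pow_lt_pow_left₀ h hxpos.le h2p0
    have h2 : (2:ℝ) ^ (2 * p) = 4 ^ p := by rw [pow_mul]; norm_num
    rw [hxpow, h2] at hlt
    linarith
  have hxleN : x ≤ (N:ℝ) := by rw [hNdef]; exact Nat.le_ceil x
  have hNlt : (N:ℝ) < x + 1 := by rw [hNdef]; exact Nat.ceil_lt_add_one hxpos.le
  have hN1le : (N:ℝ) + 1 ≤ 2 * x := by linarith
  -- finite weighted difference bound
  have hvle : ∀ j ∈ Finset.Icc 1 N, ((vcoef j : ℝ)) ≤ (N:ℝ) + 1 := by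
    intro j hj
    rw [Finset.mem_Icc] at hj
    exact_mod_cast le_trans (vcoef_le' j) (by omega : j + 1 ≤ N + 1)
  have hwd : ∑ j ∈ Finset.Icc 1 N, (vcoef j:ℝ) ^ (2 * p) * (θ j - θ₀ j) ^ 2
      ≤ ((N:ℝ) + 1) ^ (2 * p) * ∑ j ∈ Finset.Icc 1 N, (θ j - θ₀ j) ^ 2 := by
    rw [Finset.mul_sum]
    exact Finset.sum_le_sum fun j hj =>
      mul_le_mul_of_nonneg_right (pow_le_pow_left₀ (by positivity) (hvle j hj) _) (sq_nonneg _)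
  have hNp : ((N:ℝ) + 1) ^ (2 * p) ≤ 4 ^ p * (8 * Q / t) := by
    calc ((N:ℝ) + 1) ^ (2 * p) ≤ (2 * x) ^ (2 * p) := pow_le_pow_left₀ (by positivity) hN1le _
      _ = 4 ^ p * x ^ (2 * p) := by rw [mul_pow, pow_mul]; norm_num
      _ = 4 ^ p * (8 * Q / t) := by rw [hxpow]
  have hC₀pos : 0 < C₀ := by rw [hC₀]; positivity
  have h4ge : (4:ℝ) ≤ 4 ^ p := by
    calc (4:ℝ) = 4 ^ 1 := (pow_one 4).symm
      _ ≤ 4 ^ p := pow_le_pow_right₀ (by norm_num) hp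
  have h16p : (64:ℝ) * 4 ^ p ≤ 16 ^ (p + 1) := by
    have h16 : (16:ℝ) ^ (p + 1) = 16 * (4 ^ p * 4 ^ p) := by
      rw [pow_succ, show (16:ℝ) ^ p = 4 ^ p * 4 ^ p by rw [← mul_pow]; norm_num]; ring
    nlinarith [pow_pos (show (0:ℝ) < 4 by norm_num) p]
  have hwd2 : ∑ j ∈ Finset.Icc 1 N, (vcoef j:ℝ) ^ (2 * p) * (θ j - θ₀ j) ^ 2 ≤ η₀ ^ 2 / 8 := by
    have hstep : ((N:ℝ) + 1) ^ (2 * p) * ∑ j ∈ Finset.Icc 1 N, (θ j - θ₀ j) ^ 2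
        ≤ (4 ^ p * (8 * Q / t)) * (t / C₀) :=
      mul_le_mul hNp hfin (Finset.sum_nonneg fun _ _ => sq_nonneg _) (by positivity)
    have heq : (4:ℝ) ^ p * (8 * Q / t) * (t / C₀) = 4 ^ p * 8 * Q / C₀ := by
      field_simp
    have hlast : (4:ℝ) ^ p * 8 * Q / C₀ ≤ η₀ ^ 2 / 8 := by
      rw [hC₀, div_le_div_iff₀ (by positivity) (by norm_num : (0:ℝ) < 8),
        show η₀ ^ 2 * (16 ^ (p + 1) * Q / η₀ ^ 2) = 16 ^ (p + 1) * Q by field_simp]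
      calc (4:ℝ) ^ p * 8 * Q * 8 = 64 * 4 ^ p * Q := by ring
        _ ≤ 16 ^ (p + 1) * Q := mul_le_mul_of_nonneg_right h16p hQ.le
    linarith [hwd, hstep, heq ▸ hstep]
  have hw0fin : ∑ j ∈ Finset.Icc 1 N, (vcoef j:ℝ) ^ (2 * p) * θ₀ j ^ 2 ≤ Q - δ₀ := by
    rw [← hθ₀]
    exact Summable.sum_le_tsum _ (fun j _ => by positivity) hθ₀sum
  -- Minkowski
  have hMfin : Real.sqrt (∑ j ∈ Finset.Icc 1 N, (vcoef j:ℝ) ^ (2 * p) * θ j ^ 2)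
      ≤ Real.sqrt (∑ j ∈ Finset.Icc 1 N, (vcoef j:ℝ) ^ (2 * p) * (θ j - θ₀ j) ^ 2)
        + Real.sqrt (∑ j ∈ Finset.Icc 1 N, (vcoef j:ℝ) ^ (2 * p) * θ₀ j ^ 2) := by
    have h := minkowski_sum' (Finset.Icc 1 N) (fun j => (vcoef j:ℝ) ^ p * (θ j - θ₀ j))
      (fun j => (vcoef j:ℝ) ^ p * θ₀ j)
    have e1 : ∀ j : ℕ, ((vcoef j:ℝ) ^ p * (θ j - θ₀ j) + (vcoef j:ℝ) ^ p * θ₀ j) ^ 2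
        = (vcoef j:ℝ) ^ (2 * p) * θ j ^ 2 := fun j => by ring
    have e2 : ∀ j : ℕ, ((vcoef j:ℝ) ^ p * (θ j - θ₀ j)) ^ 2
        = (vcoef j:ℝ) ^ (2 * p) * (θ j - θ₀ j) ^ 2 := fun j => by ring
    have e3 : ∀ j : ℕ, ((vcoef j:ℝ) ^ p * θ₀ j) ^ 2
        = (vcoef j:ℝ) ^ (2 * p) * θ₀ j ^ 2 := fun j => by ring
    simpa only [e1, e2, e3] using h
  have hs1 : Real.sqrt (∑ j ∈ Finset.Icc 1 N, (vcoef j:ℝ) ^ (2 * p) * (θ j - θ₀ j) ^ 2)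
      < η₀ / 2 := by
    have h9 : (η₀ / 2) ^ 2 = η₀ ^ 2 / 4 := by ring
    have h8 : η₀ ^ 2 / 8 < (η₀ / 2) ^ 2 := by
      rw [h9]
      exact div_lt_div_of_pos_left (pow_pos hη₀ 2) (by norm_num) (by norm_num)
    have hlt : Real.sqrt (η₀ ^ 2 / 8) < Real.sqrt ((η₀ / 2) ^ 2) :=
      Real.sqrt_lt_sqrt (by positivity) h8
    rw [Real.sqrt_sq (by positivity)] at hlt
    exact lt_of_le_of_lt (Real.sqrt_le_sqrt hwd2) hlt
  have hs2 : Real.sqrt (∑ j ∈ Finset.Icc 1 N, (vcoef j:ℝ) ^ (2 * p) * θ₀ j ^ 2)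
      ≤ Real.sqrt (Q - δ₀) := Real.sqrt_le_sqrt hw0fin
  have hs3 : Real.sqrt (t / 8) ≤ η₀ / 2 := by
    have h8 : t / 8 ≤ (η₀ / 2) ^ 2 := by
      have h9 : (η₀ / 2) ^ 2 = η₀ ^ 2 / 4 := by ring
      rw [h9]; linarith
    calc Real.sqrt (t / 8) ≤ Real.sqrt ((η₀ / 2) ^ 2) := Real.sqrt_le_sqrt h8
      _ = η₀ / 2 := Real.sqrt_sq (by positivity)
  -- summability of the full weighted series
  have hwsum : Summable (fun j => (vcoef j:ℝ) ^ (2 * p) * θ j ^ 2) := by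
    have h' : Summable (fun j : ℕ => (vcoef (j + (N + 1)):ℝ) ^ (2 * p) * θ (j + (N + 1)) ^ 2) := by
      have e : ∀ j : ℕ, N + 1 + j = j + (N + 1) := fun j => by omega
      simpa only [e] using hsumtail
    exact (summable_nat_add_iff (f := fun j => (vcoef j:ℝ) ^ (2 * p) * θ j ^ 2) (N + 1)).mp h'
  have hdecomp : ∑' j, (vcoef j:ℝ) ^ (2 * p) * θ j ^ 2
      = (∑ j ∈ Finset.range (N + 1), (vcoef j:ℝ) ^ (2 * p) * θ j ^ 2)
        + ∑' j : ℕ, (vcoef (j + (N + 1)):ℝ) ^ (2 * p) * θ (j + (N + 1)) ^ 2 :=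
    (Summable.sum_add_tsum_nat_add (N + 1) hwsum).symm
  have hins : Finset.range (N + 1) = insert 0 (Finset.Icc 1 N) := by
    ext j
    simp only [Finset.mem_range, Finset.mem_insert, Finset.mem_Icc]
    omega
  have hr : ∑ j ∈ Finset.range (N + 1), (vcoef j:ℝ) ^ (2 * p) * θ j ^ 2
      = ∑ j ∈ Finset.Icc 1 N, (vcoef j:ℝ) ^ (2 * p) * θ j ^ 2 := by
    rw [hins, Finset.sum_insert (by simp)]
    simp [vcoef, zero_pow h2p0]
  have hT : ∑' j : ℕ, (vcoef (j + (N + 1)):ℝ) ^ (2 * p) * θ (j + (N + 1)) ^ 2 ≤ t / 8 := by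
    calc ∑' j : ℕ, (vcoef (j + (N + 1)):ℝ) ^ (2 * p) * θ (j + (N + 1)) ^ 2
        = ∑' j : ℕ, (vcoef (N + 1 + j):ℝ) ^ (2 * p) * θ (N + 1 + j) ^ 2 :=
          tsum_congr fun j => by rw [show j + (N + 1) = N + 1 + j from by omega]
      _ ≤ t / 8 := htail
  have hTnn : 0 ≤ ∑' j : ℕ, (vcoef (j + (N + 1)):ℝ) ^ (2 * p) * θ (j + (N + 1)) ^ 2 :=
    tsum_nonneg fun j => by positivity
  have hfnn : 0 ≤ ∑ j ∈ Finset.Icc 1 N, (vcoef j:ℝ) ^ (2 * p) * θ j ^ 2 :=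
    Finset.sum_nonneg fun _ _ => by positivity
  have hsqrtS : Real.sqrt (∑' j, (vcoef j:ℝ) ^ (2 * p) * θ j ^ 2) < Real.sqrt Q := by
    have hA : Real.sqrt (∑' j, (vcoef j:ℝ) ^ (2 * p) * θ j ^ 2)
        ≤ Real.sqrt (∑ j ∈ Finset.Icc 1 N, (vcoef j:ℝ) ^ (2 * p) * θ j ^ 2)
          + Real.sqrt (∑' j : ℕ, (vcoef (j + (N + 1)):ℝ) ^ (2 * p) * θ (j + (N + 1)) ^ 2) := by
      rw [hdecomp, hr]
      exact sqrt_add_le' _ _ hfnn hTnn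
    have hB : Real.sqrt (∑' j : ℕ, (vcoef (j + (N + 1)):ℝ) ^ (2 * p) * θ (j + (N + 1)) ^ 2)
        ≤ Real.sqrt (t / 8) := Real.sqrt_le_sqrt hT
    have hQsplit : Real.sqrt (Q - δ₀) + η₀ ≤ Real.sqrt Q := by linarith
    linarith
  have hSnn : 0 ≤ ∑' j, (vcoef j:ℝ) ^ (2 * p) * θ j ^ 2 := tsum_nonneg fun j => by positivity
  have hSQ : ∑' j, (vcoef j:ℝ) ^ (2 * p) * θ j ^ 2 < Q :=
    (Real.sqrt_lt_sqrt_iff hSnn).mp hsqrtS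
  -- part (ii)
  have hθ₀tails : Summable (fun j : ℕ => (vcoef (N + 1 + j):ℝ) ^ (2 * p) * θ₀ (N + 1 + j) ^ 2) := by
    have h' := (summable_nat_add_iff (f := fun j => (vcoef j:ℝ) ^ (2 * p) * θ₀ j ^ 2) (N + 1)).mpr
      hθ₀sum
    have e : ∀ j : ℕ, j + (N + 1) = N + 1 + j := fun j => by omega
    simpa only [e] using h'
  have hone : ∀ j : ℕ, (1:ℝ) ≤ ((vcoef (N + 1 + j):ℝ)) ^ (2 * p) := fun j => by
    have h1 : (1:ℝ) ≤ ((vcoef (N + 1 + j):ℝ)) := by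
      exact_mod_cast le_trans (by omega : 1 ≤ N + 1 + j) (le_vcoef' _)
    calc (1:ℝ) = 1 ^ (2 * p) := (one_pow _).symm
      _ ≤ _ := pow_le_pow_left₀ (by norm_num) h1 _
  have hθtail2 : Summable (fun j : ℕ => θ (N + 1 + j) ^ 2) :=
    Summable.of_nonneg_of_le (fun j => sq_nonneg _)
      (fun j => le_mul_of_one_le_left (sq_nonneg _) (hone j)) hsumtail
  have hθ₀tail2 : Summable (fun j : ℕ => θ₀ (N + 1 + j) ^ 2) :=
    Summable.of_nonneg_of_le (fun j => sq_nonneg _)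
      (fun j => le_mul_of_one_le_left (sq_nonneg _) (hone j)) hθ₀tails
  have hdtails : Summable (fun j : ℕ => (θ (N + 1 + j) - θ₀ (N + 1 + j)) ^ 2) :=
    Summable.of_nonneg_of_le (fun j => sq_nonneg _)
      (fun j => sub_sq_le_two_mul' _ _)
      ((hθtail2.mul_left 2).add (hθ₀tail2.mul_left 2))
  have hdsum : Summable (fun j : ℕ => (θ (j + 1) - θ₀ (j + 1)) ^ 2) := by
    have h' : Summable (fun j : ℕ => (θ (j + N + 1) - θ₀ (j + N + 1)) ^ 2) := by
      have e : ∀ j : ℕ, N + 1 + j = j + N + 1 := fun j => by omega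
      simpa only [e] using hdtails
    exact (summable_nat_add_iff (f := fun j => (θ (j + 1) - θ₀ (j + 1)) ^ 2) N).mp h'
  have hdq : ∑' j : ℕ, (θ (j + 1) - θ₀ (j + 1)) ^ 2
      = (∑ j ∈ Finset.range N, (θ (j + 1) - θ₀ (j + 1)) ^ 2)
        + ∑' j : ℕ, (θ (j + N + 1) - θ₀ (j + N + 1)) ^ 2 :=
    (Summable.sum_add_tsum_nat_add N hdsum).symm
  have hfr' : ∀ M : ℕ, ∑ j ∈ Finset.range M, (θ (j + 1) - θ₀ (j + 1)) ^ 2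
      = ∑ j ∈ Finset.Icc 1 M, (θ j - θ₀ j) ^ 2 := by
    intro M
    induction M with
    | zero => simp
    | succ M ih =>
      rw [Finset.sum_range_succ, ih,
        show Finset.Icc 1 (M + 1) = insert (M + 1) (Finset.Icc 1 M) by
          ext j
          simp only [Finset.mem_Icc, Finset.mem_insert]
          omega,
        Finset.sum_insert (by simp)]
      ring
  have hfr := hfr' N
  have hxv : ∀ j : ℕ, 8 * Q / t ≤ ((vcoef (N + 1 + j):ℝ)) ^ (2 * p) := fun j => by
    have h0 : (N:ℝ) ≤ ((vcoef (N + 1 + j):ℝ)) := by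
      exact_mod_cast le_trans (by omega : N ≤ N + 1 + j) (le_vcoef' _)
    have h1 : x ≤ (vcoef (N + 1 + j):ℝ) := le_trans hxleN h0
    calc 8 * Q / t = x ^ (2 * p) := hxpow.symm
      _ ≤ _ := pow_le_pow_left₀ hxpos.le h1 _
  have hθb : ∀ j : ℕ, θ (N + 1 + j) ^ 2
      ≤ t / (8 * Q) * ((vcoef (N + 1 + j):ℝ) ^ (2 * p) * θ (N + 1 + j) ^ 2) := fun j => by
    have h := mul_le_mul_of_nonneg_right (hxv j) (sq_nonneg (θ (N + 1 + j)))
    calc θ (N + 1 + j) ^ 2 = t / (8 * Q) * (8 * Q / t * θ (N + 1 + j) ^ 2) := by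
          field_simp
      _ ≤ _ := mul_le_mul_of_nonneg_left h (by positivity)
  have hθ₀b : ∀ j : ℕ, θ₀ (N + 1 + j) ^ 2
      ≤ t / (8 * Q) * ((vcoef (N + 1 + j):ℝ) ^ (2 * p) * θ₀ (N + 1 + j) ^ 2) := fun j => by
    have h := mul_le_mul_of_nonneg_right (hxv j) (sq_nonneg (θ₀ (N + 1 + j)))
    calc θ₀ (N + 1 + j) ^ 2 = t / (8 * Q) * (8 * Q / t * θ₀ (N + 1 + j) ^ 2) := by
          field_simp
      _ ≤ _ := mul_le_mul_of_nonneg_left h (by positivity)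
  have htailθ : ∑' j : ℕ, θ (N + 1 + j) ^ 2 ≤ t / (8 * Q) * (t / 8) := by
    calc ∑' j : ℕ, θ (N + 1 + j) ^ 2
        ≤ ∑' j : ℕ, t / (8 * Q) * ((vcoef (N + 1 + j):ℝ) ^ (2 * p) * θ (N + 1 + j) ^ 2) :=
          Summable.tsum_le_tsum hθb hθtail2 (hsumtail.mul_left _)
      _ = t / (8 * Q) * ∑' j : ℕ, (vcoef (N + 1 + j):ℝ) ^ (2 * p) * θ (N + 1 + j) ^ 2 :=
          tsum_mul_left
      _ ≤ t / (8 * Q) * (t / 8) := mul_le_mul_of_nonneg_left htail (by positivity)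
  have hθ₀tailw : ∑' j : ℕ, (vcoef (N + 1 + j):ℝ) ^ (2 * p) * θ₀ (N + 1 + j) ^ 2 ≤ Q := by
    have h : (∑ j ∈ Finset.range (N + 1), (vcoef j:ℝ) ^ (2 * p) * θ₀ j ^ 2)
        + ∑' j : ℕ, (vcoef (j + (N + 1)):ℝ) ^ (2 * p) * θ₀ (j + (N + 1)) ^ 2 = Q - δ₀ := by
      rw [← hθ₀]; exact Summable.sum_add_tsum_nat_add (N + 1) hθ₀sum
    have he : ∑' j : ℕ, (vcoef (j + (N + 1)):ℝ) ^ (2 * p) * θ₀ (j + (N + 1)) ^ 2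
        = ∑' j : ℕ, (vcoef (N + 1 + j):ℝ) ^ (2 * p) * θ₀ (N + 1 + j) ^ 2 :=
      tsum_congr fun j => by rw [show j + (N + 1) = N + 1 + j from by omega]
    have hfin0 : 0 ≤ ∑ j ∈ Finset.range (N + 1), (vcoef j:ℝ) ^ (2 * p) * θ₀ j ^ 2 :=
      Finset.sum_nonneg fun _ _ => by positivity
    linarith [he ▸ h]
  have htailθ₀ : ∑' j : ℕ, θ₀ (N + 1 + j) ^ 2 ≤ t / (8 * Q) * Q := by
    calc ∑' j : ℕ, θ₀ (N + 1 + j) ^ 2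
        ≤ ∑' j : ℕ, t / (8 * Q) * ((vcoef (N + 1 + j):ℝ) ^ (2 * p) * θ₀ (N + 1 + j) ^ 2) :=
          Summable.tsum_le_tsum hθ₀b hθ₀tail2 (hθ₀tails.mul_left _)
      _ = t / (8 * Q) * ∑' j : ℕ, (vcoef (N + 1 + j):ℝ) ^ (2 * p) * θ₀ (N + 1 + j) ^ 2 :=
          tsum_mul_left
      _ ≤ t / (8 * Q) * Q := mul_le_mul_of_nonneg_left hθ₀tailw (by positivity)
  have htaild : ∑' j : ℕ, (θ (N + 1 + j) - θ₀ (N + 1 + j)) ^ 2 ≤ t / 2 := by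
    have h1 : ∑' j : ℕ, (θ (N + 1 + j) - θ₀ (N + 1 + j)) ^ 2
        ≤ ∑' j : ℕ, (2 * θ (N + 1 + j) ^ 2 + 2 * θ₀ (N + 1 + j) ^ 2) :=
      Summable.tsum_le_tsum (fun j => sub_sq_le_two_mul' _ _)
        hdtails ((hθtail2.mul_left 2).add (hθ₀tail2.mul_left 2))
    have h2 : ∑' j : ℕ, (2 * θ (N + 1 + j) ^ 2 + 2 * θ₀ (N + 1 + j) ^ 2)
        = 2 * (∑' j : ℕ, θ (N + 1 + j) ^ 2) + 2 * (∑' j : ℕ, θ₀ (N + 1 + j) ^ 2) := by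
      rw [Summable.tsum_add (hθtail2.mul_left 2) (hθ₀tail2.mul_left 2), tsum_mul_left, tsum_mul_left]
    have e1 : 2 * (t / (8 * Q) * Q) = t / 4 := by field_simp; ring
    have e2 : t / (8 * Q) * (t / 8) ≤ t / (8 * Q) * Q :=
      mul_le_mul_of_nonneg_left (by linarith) (by positivity)
    linarith
  have hC2 : (2:ℝ) ≤ C₀ := by
    have hsq : η₀ ≤ Real.sqrt Q := le_trans hη₀le (by linarith [Real.sqrt_nonneg (Q - δ₀)])
    have hη₀Q : η₀ ^ 2 ≤ Q := by
      have h := pow_le_pow_left₀ hη₀.le hsq 2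
      rwa [Real.sq_sqrt hQ.le] at h
    have h16 : (16:ℝ) ≤ 16 ^ (p + 1) := by
      calc (16:ℝ) = 16 ^ 1 := (pow_one _).symm
        _ ≤ 16 ^ (p + 1) := pow_le_pow_right₀ (by norm_num) (by omega)
    rw [hC₀, le_div_iff₀ (by positivity)]
    linarith [mul_le_mul_of_nonneg_right h16 hQ.le]
  have hfin2 : ∑ j ∈ Finset.Icc 1 N, (θ j - θ₀ j) ^ 2 ≤ t / 2 := by
    have h : t / C₀ ≤ t / 2 := by
      rw [div_le_div_iff₀ hC₀pos (by norm_num)]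
      calc t * 2 ≤ t * C₀ := mul_le_mul_of_nonneg_left hC2 htpos.le
        _ = t * C₀ := rfl
    linarith
  have he2 : ∑' j : ℕ, (θ (j + N + 1) - θ₀ (j + N + 1)) ^ 2
      = ∑' j : ℕ, (θ (N + 1 + j) - θ₀ (N + 1 + j)) ^ 2 :=
    tsum_congr fun j => by rw [show j + N + 1 = N + 1 + j from by omega]
  refine ⟨⟨hwsum, hSQ⟩, hdsum, ?_⟩
  rw [hdq, hfr, he2]
  linarith
end

section
/- Let p ≥ 1 and n ≥ 1 be integers and set N₀ = ⌈n^{1/(2p+1)}⌉. Then Σ_{j=1}^{N₀} v_j^{2p} / (n + v_j^{2p+1}) < 2^{2p+1}. -/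
open MeasureTheory Filter ProbabilityTheory

lemma vcoef_ge (j : ℕ) (hj : 1 ≤ j) : 1 ≤ vcoef j := by
  unfold vcoef
  split_ifs <;> omega

/-- The bound `Σ_{j=1}^{N₀} v_j^{2p} / (n + v_j^{2p+1}) < 2^{2p+1}`. -/
theorem statement_19 (p : ℕ) (hp : 1 ≤ p) (n : ℕ) (hn : 1 ≤ n)
    (N₀ : ℕ) (hN₀ : N₀ = ⌈(n : ℝ) ^ ((1 : ℝ) / (2 * (p : ℝ) + 1))⌉₊) :
    ∑ j ∈ Finset.Icc 1 N₀,
        (vcoef j : ℝ) ^ (2 * p) / ((n : ℝ) + (vcoef j : ℝ) ^ (2 * p + 1)) <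
      2 ^ (2 * p + 1) := by
  set m : ℝ := (n : ℝ) ^ ((1 : ℝ) / (2 * (p : ℝ) + 1)) with hm
  have hden : (0:ℝ) < 2 * (p : ℝ) + 1 := by positivity
  have hn1 : (1:ℝ) ≤ (n : ℝ) := by exact_mod_cast hn
  have hm1 : (1:ℝ) ≤ m := Real.one_le_rpow hn1 (by positivity)
  have hm0 : (0:ℝ) < m := lt_of_lt_of_le one_pos hm1
  have hmpow : m ^ (2 * p + 1) = (n : ℝ) := by
    rw [hm, ← Real.rpow_natCast (_ ^ _), ← Real.rpow_mul (by positivity)]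
    push_cast
    rw [one_div, inv_mul_cancel₀ (by positivity), Real.rpow_one]
  -- each term is ≤ 1/m
  have key : ∀ j ∈ Finset.Icc 1 N₀,
      (vcoef j : ℝ) ^ (2 * p) / ((n : ℝ) + (vcoef j : ℝ) ^ (2 * p + 1)) ≤ 1 / m := by
    intro j hj
    simp only [Finset.mem_Icc] at hj
    have hv : (1:ℝ) ≤ (vcoef j : ℝ) := by exact_mod_cast vcoef_ge j hj.1
    have hv0 : (0:ℝ) < (vcoef j : ℝ) := lt_of_lt_of_le one_pos hv
    have hdpos : (0:ℝ) < (n : ℝ) + (vcoef j : ℝ) ^ (2 * p + 1) := by positivity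
    rw [div_le_div_iff₀ hdpos hm0, one_mul]
    rcases le_total ((vcoef j : ℝ)) m with h | h
    · have : (vcoef j : ℝ) ^ (2 * p) * m ≤ m ^ (2 * p) * m := by gcongr
      calc (vcoef j : ℝ) ^ (2 * p) * m ≤ m ^ (2 * p) * m := this
        _ = m ^ (2 * p + 1) := by ring
        _ = (n : ℝ) := hmpow
        _ ≤ (n : ℝ) + (vcoef j : ℝ) ^ (2 * p + 1) := le_add_of_nonneg_right (by positivity)
    · calc (vcoef j : ℝ) ^ (2 * p) * m ≤ (vcoef j : ℝ) ^ (2 * p) * (vcoef j : ℝ) := by gcongr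
        _ = (vcoef j : ℝ) ^ (2 * p + 1) := by ring
        _ ≤ (n : ℝ) + (vcoef j : ℝ) ^ (2 * p + 1) := by
            nlinarith [Nat.cast_nonneg (α := ℝ) n]
  have hsum : ∑ j ∈ Finset.Icc 1 N₀,
      (vcoef j : ℝ) ^ (2 * p) / ((n : ℝ) + (vcoef j : ℝ) ^ (2 * p + 1))
      ≤ (N₀ : ℝ) * (1 / m) := by
    have := Finset.sum_le_card_nsmul _ _ (1 / m) key
    simpa [Nat.card_Icc, nsmul_eq_mul] using this
  have hN : (N₀ : ℝ) < m + 1 := by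
    rw [hN₀]
    exact Nat.ceil_lt_add_one (le_of_lt hm0)
  have h2 : (N₀ : ℝ) * (1 / m) < 2 := by
    rw [mul_one_div, div_lt_iff₀ hm0]
    nlinarith
  have h3 : (2:ℝ) ≤ 2 ^ (2 * p + 1) := by
    calc (2:ℝ) = 2 ^ 1 := (pow_one 2).symm
      _ ≤ 2 ^ (2 * p + 1) := by
          apply pow_le_pow_right₀ (by norm_num)
          omega
  linarith
end
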